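/- Let f : [a,b] → ℝ be continuous on [a,b] and differentiable on (a,b), where the interval [a,b] does not contain 0. Then |f((a+b)/2) − (1/(b−a))·∫ₐᵇ f(t) dt| ≤ ((b−a)/(2|a+b|))·‖f − ℓf′‖∞. -/

import Mathlib

open Set intervalIntegral

theorem pompeiu_aux (a b : ℝ) (f : ℝ → ℝ)
    (h0 : (0:ℝ) ∉ Set.Icc a b)
    (hf : ContinuousOn f (Set.Icc a b))
    (hd : DifferentiableOn ℝ f (Set.Ioo a b))
    {u v : ℝ} (hu : u ∈ Set.Icc a b) (hv : v ∈ Set.Icc a b) (huv : u < v) :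
    ∃ c ∈ Set.Ioo a b, u * f v - v * f u = (u - v) * (f c - c * deriv f c) := by
  have ne0 : ∀ t ∈ Set.Icc a b, t ≠ 0 := fun t ht h => h0 (h ▸ ht)
  have hsub : Set.Icc u v ⊆ Set.Icc a b := Set.Icc_subset_Icc hu.1 hv.2
  have hsub' : Set.Ioo u v ⊆ Set.Ioo a b := Set.Ioo_subset_Ioo hu.1 hv.2
  have hFc : ContinuousOn (fun t => f t / t) (Set.Icc u v) :=
    (hf.mono hsub).div continuousOn_id (fun t ht => ne0 t (hsub ht))
  have hGc : ContinuousOn (fun t : ℝ => t⁻¹) (Set.Icc u v) :=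
    ContinuousOn.inv₀ continuousOn_id (fun t ht => ne0 t (hsub ht))
  have hder : ∀ c ∈ Set.Ioo u v, HasDerivAt f (deriv f c) c := fun c hc =>
    ((hd c (hsub' hc)).differentiableAt (isOpen_Ioo.mem_nhds (hsub' hc))).hasDerivAt
  have hF' : ∀ c ∈ Set.Ioo u v,
      HasDerivAt (fun t => f t / t) ((deriv f c * c - f c * 1) / c ^ 2) c := fun c hc =>
    (hder c hc).div (hasDerivAt_id c) (ne0 c (hsub (Set.Ioo_subset_Icc_self hc)))
  have hG' : ∀ c ∈ Set.Ioo u v, HasDerivAt (fun t : ℝ => t⁻¹) (-(c ^ 2)⁻¹) c := fun c hc =>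
    hasDerivAt_inv (ne0 c (hsub (Set.Ioo_subset_Icc_self hc)))
  obtain ⟨c, hc, heq⟩ := exists_ratio_hasDerivAt_eq_ratio_slope
    (fun t => f t / t) (fun c => (deriv f c * c - f c * 1) / c ^ 2) huv hFc hF'
    (fun t : ℝ => t⁻¹) (fun c => -(c ^ 2)⁻¹) hGc hG'
  refine ⟨c, hsub' hc, ?_⟩
  have hc0 : c ≠ 0 := ne0 c (hsub (Set.Ioo_subset_Icc_self hc))
  have hu0 : u ≠ 0 := ne0 u hu
  have hv0 : v ≠ 0 := ne0 v hv
  field_simp at heq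
  linear_combination heq

/-- Corollary 3.2: the midpoint case of the Ostrowski–Pompeiu inequality. -/
theorem ostrowski_pompeiu_midpoint (a b : ℝ) (f : ℝ → ℝ)
    (hab : a < b) (h0 : (0:ℝ) ∉ Set.Icc a b)
    (hf : ContinuousOn f (Set.Icc a b))
    (hd : DifferentiableOn ℝ f (Set.Ioo a b))
    (hbdd : BddAbove ((fun ξ => |f ξ - ξ * deriv f ξ|) '' Set.Ioo a b)) :
    |f ((a + b) / 2) - (1 / (b - a)) * ∫ t in a..b, f t| ≤
      (b - a) / (2 * |a + b|) *
        sSup ((fun ξ => |f ξ - ξ * deriv f ξ|) '' Set.Ioo a b) := by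
  set M := sSup ((fun ξ => |f ξ - ξ * deriv f ξ|) '' Set.Ioo a b) with hM
  set x := (a + b) / 2 with hxdef
  set I := ∫ t in a..b, f t with hI
  have hax : a ≤ x := by simp only [hxdef]; linarith
  have hxb : x ≤ b := by simp only [hxdef]; linarith
  have hba : b - a ≠ 0 := by linarith
  have hxmem : x ∈ Set.Icc a b := ⟨hax, hxb⟩
  have hx0 : x ≠ 0 := fun h => h0 (h ▸ hxmem)
  have hab0 : a + b ≠ 0 := by
    intro h; apply hx0; simp [hxdef, h]
  -- the key pointwise bound
  have key : ∀ t ∈ Set.Icc a b, |t * f x - x * f t| ≤ |t - x| * M := by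
    intro t ht
    rcases lt_trichotomy t x with h | h | h
    · obtain ⟨c, hc, hceq⟩ := pompeiu_aux a b f h0 hf hd ht hxmem h
      rw [hceq, abs_mul]
      exact mul_le_mul_of_nonneg_left
        (le_csSup hbdd ⟨c, hc, rfl⟩) (abs_nonneg _)
    · simp [h]
    · obtain ⟨c, hc, hceq⟩ := pompeiu_aux a b f h0 hf hd hxmem ht h
      have h1 : t * f x - x * f t = -(x * f t - t * f x) := by ring
      rw [h1, abs_neg, hceq, abs_mul, abs_sub_comm x t]
      exact mul_le_mul_of_nonneg_left
        (le_csSup hbdd ⟨c, hc, rfl⟩) (abs_nonneg _)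
  -- integrability facts
  have hfi : IntervalIntegrable f MeasureTheory.volume a b :=
    hf.intervalIntegrable_of_Icc hab.le
  have hgi : IntervalIntegrable (fun t => t * f x - x * f t) MeasureTheory.volume a b :=
    ((intervalIntegrable_id.mul_const (f x)).sub (hfi.const_mul x))
  have hbi : IntervalIntegrable (fun t => |t - x| * M) MeasureTheory.volume a b :=
    (((continuous_id.sub continuous_const).abs.mul continuous_const)).intervalIntegrable a b
  -- the integral bound
  have step1 : |∫ t in a..b, (t * f x - x * f t)| ≤ ∫ t in a..b, |t * f x - x * f t| :=
    abs_integral_le_integral_abs hab.le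
  have step2 : (∫ t in a..b, |t * f x - x * f t|) ≤ ∫ t in a..b, |t - x| * M := by
    apply integral_mono_on hab.le hgi.abs hbi
    intro t ht
    exact key t ht
  -- compute the integrals
  have habsint : (∫ t in a..b, |t - x|) = (b - a) ^ 2 / 4 := by
    have h1 : IntervalIntegrable (fun t : ℝ => |t - x|) MeasureTheory.volume a x :=
      ((continuous_id.sub continuous_const).abs).intervalIntegrable a x
    have h2 : IntervalIntegrable (fun t : ℝ => |t - x|) MeasureTheory.volume x b :=
      ((continuous_id.sub continuous_const).abs).intervalIntegrable x b
    rw [← integral_add_adjacent_intervals h1 h2]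
    have e1 : (∫ t in a..x, |t - x|) = ∫ t in a..x, (x - t) := by
      apply integral_congr
      intro t ht
      rw [Set.uIcc_of_le hax] at ht
      show |t - x| = x - t
      rw [abs_of_nonpos (by linarith [ht.2])]; ring
    have e2 : (∫ t in x..b, |t - x|) = ∫ t in x..b, (t - x) := by
      apply integral_congr
      intro t ht
      rw [Set.uIcc_of_le hxb] at ht
      show |t - x| = t - x
      rw [abs_of_nonneg (by linarith [ht.1])]
    rw [e1, e2,
      integral_sub intervalIntegrable_const intervalIntegrable_id,
      integral_sub intervalIntegrable_id intervalIntegrable_const]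
    rw [integral_id, integral_id, integral_const, integral_const]
    simp only [hxdef, smul_eq_mul]; ring
  have hbint : (∫ t in a..b, |t - x| * M) = (b - a) ^ 2 / 4 * M := by
    rw [integral_mul_const, habsint]
  have hgint : (∫ t in a..b, (t * f x - x * f t)) = x * (b - a) * f x - x * I := by
    rw [integral_sub (intervalIntegrable_id.mul_const (f x)) (hfi.const_mul x),
      integral_mul_const, integral_const_mul, integral_id, ← hI]
    simp only [hxdef]; ring
  -- combine
  have hmain : |x * (b - a) * (f x - (1 / (b - a)) * I)| ≤ (b - a) ^ 2 / 4 * M := by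
    have heq : x * (b - a) * (f x - (1 / (b - a)) * I)
        = ∫ t in a..b, (t * f x - x * f t) := by
      rw [hgint]
      field_simp
    rw [heq]
    calc |∫ t in a..b, (t * f x - x * f t)| ≤ _ := step1
      _ ≤ _ := step2
      _ = _ := hbint
  have habsx : |x * (b - a)| = |a + b| / 2 * (b - a) := by
    rw [abs_mul, abs_of_pos (by linarith : (0:ℝ) < b - a), hxdef, abs_div]
    norm_num
  rw [abs_mul, habsx] at hmain
  have hpos : (0:ℝ) < |a + b| := abs_pos.mpr hab0
  rw [show (b - a) / (2 * |a + b|) * M = (b - a) * M / (2 * |a + b|) from by ring,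
    le_div_iff₀ (by positivity : (0:ℝ) < 2 * |a + b|)]
  nlinarith [hmain, hpos, sub_pos.mpr hab,
    abs_nonneg (f x - (1 / (b - a)) * I),
    mul_pos hpos (sub_pos.mpr hab)]
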